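/- Let y1 < y2 and q1, q2 with u(x̃, y1) - q1 = u(x̃, y2) - q2. Define Σ̃(x) = u(x, y1) - q1 - kx for x ≥ x̃ and Σ̃(x) = u(x, y2) - q2 - kx for x < x̃. If u is strictly submodular, then the right derivative of Σ̃ at x̃ strictly exceeds its left derivative, and consequently x̃ is not a local maximizer of Σ̃. -/

import Mathlib

open Set

/-- With strict submodularity and indifference u(x̃,y1)-q1 = u(x̃,y2)-q2 for y1 < y2,
the piecewise joint-surplus function Σ̃ has right derivative u₁(x̃,y1)-k at x̃ and left
derivative u₁(x̃,y2)-k, the right derivative strictly exceeds the left derivative, and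
x̃ is not a local maximizer of Σ̃. -/
theorem stmt_5 (u u1 : ℝ → ℝ → ℝ) (k : ℝ) (hk : 0 < k)
    (hderiv : ∀ y x, HasDerivAt (fun t => u t y) (u1 x y) x)
    (h12 : ∀ x, StrictAnti (fun y => u1 x y))
    (xt y1 y2 q1 q2 : ℝ) (hxt : 0 < xt) (hy1 : 0 ≤ y1) (hy : y1 < y2)
    (hindiff : u xt y1 - q1 = u xt y2 - q2) :
    HasDerivWithinAt (fun x => if x < xt then u x y2 - q2 - k * x else u x y1 - q1 - k * x)
        (u1 xt y1 - k) (Set.Ici xt) xt ∧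
    HasDerivWithinAt (fun x => if x < xt then u x y2 - q2 - k * x else u x y1 - q1 - k * x)
        (u1 xt y2 - k) (Set.Iic xt) xt ∧
    u1 xt y2 - k < u1 xt y1 - k ∧
    ¬ IsLocalMax (fun x => if x < xt then u x y2 - q2 - k * x else u x y1 - q1 - k * x) xt := by
  set f : ℝ → ℝ := fun x => if x < xt then u x y2 - q2 - k * x else u x y1 - q1 - k * x with hf
  have hd1 : HasDerivAt (fun x => u x y1 - q1 - k * x) (u1 xt y1 - k) xt := by
    have h := ((hderiv y1 xt).sub_const q1).sub ((hasDerivAt_id xt).const_mul k)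
    simp only [mul_one] at h
    exact h
  have hd2 : HasDerivAt (fun x => u x y2 - q2 - k * x) (u1 xt y2 - k) xt := by
    have h := ((hderiv y2 xt).sub_const q2).sub ((hasDerivAt_id xt).const_mul k)
    simp only [mul_one] at h
    exact h
  have hright : HasDerivWithinAt f (u1 xt y1 - k) (Set.Ici xt) xt := by
    refine (hd1.hasDerivWithinAt).congr (fun x hx => ?_) ?_
    · simp [hf, not_lt.mpr (mem_Ici.mp hx)]
    · simp [hf]
  have hleft : HasDerivWithinAt f (u1 xt y2 - k) (Set.Iic xt) xt := by
    refine (hd2.hasDerivWithinAt).congr (fun x hx => ?_) ?_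
    · rcases lt_or_eq_of_le (mem_Iic.mp hx) with h | h
      · simp [hf, h]
      · simp [hf, h]; linarith
    · simp [hf]; linarith
  have hlt : u1 xt y2 - k < u1 xt y1 - k := by
    have := h12 xt hy
    simpa using sub_lt_sub_right this k
  refine ⟨hright, hleft, hlt, ?_⟩
  intro hmax
  have h1 : (1 : ℝ) ∈ posTangentConeAt (Set.Ici xt) xt := by
    apply mem_posTangentConeAt_of_segment_subset
    intro z hz
    rcases hz with ⟨a, b, ha, hb, hab, rfl⟩
    simp only [mem_Ici, smul_eq_mul]
    nlinarith
  have h2 : (-1 : ℝ) ∈ posTangentConeAt (Set.Iic xt) xt := by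
    apply mem_posTangentConeAt_of_segment_subset
    intro z hz
    rcases hz with ⟨a, b, ha, hb, hab, rfl⟩
    simp only [mem_Iic, smul_eq_mul]
    nlinarith
  have hA := (hmax.on (Set.Ici xt)).hasFDerivWithinAt_nonpos hright h1
  have hB := (hmax.on (Set.Iic xt)).hasFDerivWithinAt_nonpos hleft h2
  simp at hA hB
  linarith
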